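/- Let C, T, D be positive reals with C ≤ T. Define ω^heavy(Δ) = work(Δ + D) where work(t) = ⌊t/T⌋·C + min(C, t − ⌊t/T⌋·T) and U = C/T. Then ω^heavy(Δ) ≤ C + U·D − C·U + U·Δ for all Δ ≥ 0. -/

import Mathlib

noncomputable def work (C T t : ℝ) : ℝ := ⌊t / T⌋ * C + min C (t - ⌊t / T⌋ * T)

theorem omegaHeavy_linear_upper_bound
    (C T D : ℝ) (hC : 0 < C) (hT : 0 < T) (hD : 0 < D) (hCT : C ≤ T) :
    ∀ Δ : ℝ, 0 ≤ Δ →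
      work C T (Δ + D) ≤ C + (C / T) * D - C * (C / T) + (C / T) * Δ := by
  intro Δ _
  set t : ℝ := Δ + D with ht
  have key : work C T t ≤ (C / T) * t + C - C * (C / T) := by
    unfold work
    set n : ℝ := (⌊t / T⌋ : ℝ) with hn
    set r : ℝ := t - n * T with hr
    have htnr : t = n * T + r := by ring
    rw [htnr]
    have hmin : min C r ≤ (C / T) * r + C - C * (C / T) := by
      rcases le_total C r with h | h
      · rw [min_eq_left h]
        have : C / T * C ≤ C / T * r :=
          mul_le_mul_of_nonneg_left h (by positivity)
        nlinarith
      · rw [min_eq_right h]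
        have h1 : 0 ≤ (C - r) * (1 - C / T) := by
          apply mul_nonneg (by linarith)
          have : C / T ≤ 1 := (div_le_one hT).mpr hCT
          linarith
        nlinarith
    have : C / T * (n * T) = n * C := by field_simp
    linarith
  have : C + (C / T) * D - C * (C / T) + (C / T) * Δ = (C / T) * t + C - C * (C / T) := by
    rw [ht]; ring
  linarith
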